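/- Let A ∈ sp(V, Ω) satisfy A² = +I, with eigenspaces V₊ = ker(A − I), V₋ = ker(A + I) and projection P₊: V → V₊ along V₋. If g: V → V is a smooth diffeomorphism satisfying Ω(g(z) − A(g(z)), Dg_z(v)) = Ω(z − Az, v) for all z, v ∈ V, then g commutes with the projection P₊, i.e. P₊(g(z)) = g(P₊(z)) for all z ∈ V; in particular g maps V₊ into itself. -/

import Mathlib

set_option maxHeartbeats 1000000 in
theorem stmt_13 {V : Type*} [NormedAddCommGroup V] [NormedSpace ℝ V] [FiniteDimensional ℝ V]
    (Ω : V →ₗ[ℝ] V →ₗ[ℝ] ℝ)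
    (hΩalt : ∀ x : V, Ω x x = 0)
    (hΩnd : ∀ x : V, (∀ y : V, Ω x y = 0) → x = 0)
    (A : V →ₗ[ℝ] V) (hA : ∀ x y : V, Ω (A x) y + Ω x (A y) = 0)
    (hA2 : A ∘ₗ A = LinearMap.id)
    (P : V →ₗ[ℝ] V)
    (hPp : ∀ x ∈ LinearMap.ker (A - LinearMap.id), P x = x)
    (hPm : ∀ x ∈ LinearMap.ker (A + LinearMap.id), P x = 0)
    (g ginv : V → V) (hg : ContDiff ℝ (⊤ : ℕ∞) g) (hginv : ContDiff ℝ (⊤ : ℕ∞) ginv)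
    (hli : Function.LeftInverse ginv g) (hri : Function.RightInverse ginv g)
    (hpres : ∀ z v : V, Ω (g z - A (g z)) (fderiv ℝ g z v) = Ω (z - A z) v) :
    (∀ z : V, P (g z) = g (P z)) ∧
      ∀ z ∈ LinearMap.ker (A - LinearMap.id), g z ∈ LinearMap.ker (A - LinearMap.id) := by
  classical
  -- antisymmetry of Ω
  have hanti : ∀ x y : V, Ω x y = - Ω y x := by
    intro x y
    have h := hΩalt (x + y)
    simp only [map_add, LinearMap.add_apply, hΩalt] at h
    linarith
  have hA2' : ∀ x : V, A (A x) = x := by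
    intro x
    have := LinearMap.ext_iff.mp hA2 x
    simpa using this
  set B : V →ₗ[ℝ] V := LinearMap.id - A with hBdef
  have hBapp : ∀ x : V, B x = x - A x := by
    intro x; simp [hBdef, LinearMap.sub_apply]
  -- key algebraic identity
  have hkey : ∀ u t : V, Ω (B u) t - Ω (B t) u = 2 * Ω u t := by
    intro u t
    have h1 : Ω (A t) u = - Ω t (A u) := by linarith [hA t u]
    have h2 : Ω t (A u) = - Ω (A u) t := hanti t (A u)
    have h3 : Ω t u = - Ω u t := hanti t u
    rw [hBapp, hBapp]
    simp only [map_sub, LinearMap.sub_apply]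
    linarith
  have h1le : (1 : WithTop ℕ∞) ≤ ((⊤:ℕ∞) : WithTop ℕ∞) := by exact_mod_cast le_top
  have hgd : Differentiable ℝ g := hg.differentiable (by simp)
  -- derivative of g is invertible
  have hsurj : ∀ z : V, Function.Surjective (fderiv ℝ g z) := by
    intro z
    have hco : (fderiv ℝ ginv (g z)).comp (fderiv ℝ g z) = ContinuousLinearMap.id ℝ V := by
      have h1 : HasFDerivAt (ginv ∘ g) ((fderiv ℝ ginv (g z)).comp (fderiv ℝ g z)) z :=
        ((hginv.differentiable (by simp) (g z)).hasFDerivAt).comp z (hgd z).hasFDerivAt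
      have h2 : (ginv ∘ g) = id := funext fun x => hli x
      rw [h2] at h1
      exact (h1.unique (hasFDerivAt_id z)).symm ▸ rfl
    have hinj : Function.Injective (fderiv ℝ g z) := by
      intro a b hab
      have : (fderiv ℝ ginv (g z)).comp (fderiv ℝ g z) a
          = (fderiv ℝ ginv (g z)).comp (fderiv ℝ g z) b := by
        simp [ContinuousLinearMap.comp_apply, hab]
      rwa [hco, ContinuousLinearMap.id_apply, ContinuousLinearMap.id_apply] at this
    exact LinearMap.injective_iff_surjective.mp hinj
  -- second derivative data
  have hgderiv : ContDiff ℝ (⊤ : ℕ∞) (fderiv ℝ g) := hg.fderiv_right (by exact_mod_cast le_top)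
  have hud : Differentiable ℝ (fderiv ℝ g) := hgderiv.differentiable (by simp)
  -- the differentiated identity
  have hdiffid : ∀ (z v w : V),
      Ω (B (g z)) ((fderiv ℝ (fderiv ℝ g) z w) v)
        + Ω (B (fderiv ℝ g z w)) (fderiv ℝ g z v) = Ω (B w) v := by
    intro z v w
    -- the continuous linear map  x ↦ (L ↦ Ω (B x) (L v))
    let Mv : V →ₗ[ℝ] ((V →L[ℝ] V) →L[ℝ] ℝ) :=
      { toFun := fun x => (LinearMap.toContinuousLinearMap (Ω (B x))).comp
          (ContinuousLinearMap.apply ℝ V v)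
        map_add' := by
          intro x y
          ext L
          simp [map_add, LinearMap.add_apply]
        map_smul' := by
          intro c x
          ext L
          simp }
    let MvC : V →L[ℝ] ((V →L[ℝ] V) →L[ℝ] ℝ) := LinearMap.toContinuousLinearMap Mv
    have hMvC : ∀ (x : V) (L : V →L[ℝ] V), MvC x L = Ω (B x) (L v) := by
      intro x L
      simp [MvC, Mv]
    let LvC : V →L[ℝ] ℝ := LinearMap.toContinuousLinearMap ((Ω.flip v).comp B)
    have hLvC : ∀ x : V, LvC x = Ω (B x) v := by intro x; simp [LvC]
    have hc : HasFDerivAt (fun y => MvC (g y)) (MvC.comp (fderiv ℝ g z)) z := by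
      exact HasFDerivAt.comp (g := ⇑MvC) z (ContinuousLinearMap.hasFDerivAt
        (x := g z) MvC) (hgd z).hasFDerivAt
    have hu : HasFDerivAt (fderiv ℝ g) (fderiv ℝ (fderiv ℝ g) z) z := (hud z).hasFDerivAt
    have h1 : HasFDerivAt (fun y => (MvC (g y)) (fderiv ℝ g y))
        ((MvC (g z)).comp (fderiv ℝ (fderiv ℝ g) z)
          + (MvC.comp (fderiv ℝ g z)).flip (fderiv ℝ g z)) z := hc.clm_apply hu
    have hfun : (fun y => (MvC (g y)) (fderiv ℝ g y)) = fun y => LvC y := by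
      funext y
      rw [hMvC, hLvC, hBapp y, hBapp (g y)]
      exact hpres y v
    rw [hfun] at h1
    have h2 : HasFDerivAt (fun y => LvC y) LvC z := LvC.hasFDerivAt
    have heq := h1.unique h2
    have := DFunLike.congr_fun heq w
    simp only [ContinuousLinearMap.add_apply, ContinuousLinearMap.comp_apply,
      ContinuousLinearMap.flip_apply] at this
    rw [hMvC, hMvC, hLvC] at this
    exact this
  -- symmetry of second derivative
  have hsymm : ∀ z v w : V,
      (fderiv ℝ (fderiv ℝ g) z w) v = (fderiv ℝ (fderiv ℝ g) z v) w := by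
    intro z v w
    exact (second_derivative_symmetric (fun y => (hgd y).hasFDerivAt)
      ((hud z).hasFDerivAt) w v)
  -- g is symplectic
  have hsymp : ∀ z w v : V, Ω (fderiv ℝ g z w) (fderiv ℝ g z v) = Ω w v := by
    intro z w v
    have h1 := hdiffid z v w
    have h2 := hdiffid z w v
    have hs := hsymm z v w
    have hk1 := hkey (fderiv ℝ g z w) (fderiv ℝ g z v)
    have hk2 := hkey w v
    rw [hs] at h1
    linarith [hk1, hk2, h1, h2]
  -- B (g z) = Dg_z (B z)
  have hBg : ∀ z : V, B (g z) = fderiv ℝ g z (B z) := by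
    intro z
    have h0 : ∀ y : V, Ω (B (g z) - fderiv ℝ g z (B z)) y = 0 := by
      intro y
      obtain ⟨u, hu⟩ := hsurj z y
      have e1 : Ω (B (g z)) (fderiv ℝ g z u) = Ω (B z) u := by
        rw [hBapp (g z), hBapp z]; exact hpres z u
      have e2 : Ω (fderiv ℝ g z (B z)) (fderiv ℝ g z u) = Ω (B z) u := hsymp z (B z) u
      rw [← hu]
      simp only [map_sub, LinearMap.sub_apply]
      rw [e1, e2]; ring
    have := hΩnd _ h0
    exact sub_eq_zero.mp this
  -- g preserves V₊
  have hplus : ∀ z ∈ LinearMap.ker (A - LinearMap.id), g z ∈ LinearMap.ker (A - LinearMap.id) := by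
    intro z hz
    have hz' : A z = z := by
      have := LinearMap.mem_ker.mp hz
      have h := LinearMap.sub_apply A LinearMap.id z ▸ this
      simpa [sub_eq_zero] using h
    have hBz : B z = 0 := by rw [hBapp, hz', sub_self]
    have : B (g z) = 0 := by rw [hBg z, hBz, map_zero]
    rw [hBapp] at this
    rw [LinearMap.mem_ker, LinearMap.sub_apply, LinearMap.id_apply, sub_eq_zero]
    have := sub_eq_zero.mp this
    exact this.symm
  -- structure of P
  have hPform : ∀ z : V, P z = (2:ℝ)⁻¹ • (z + A z) := by
    intro z
    have hzp : (2:ℝ)⁻¹ • (z + A z) ∈ LinearMap.ker (A - LinearMap.id) := by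
      rw [LinearMap.mem_ker, LinearMap.sub_apply, LinearMap.id_apply]
      rw [map_smul, map_add, hA2']
      module
    have hzm : (2:ℝ)⁻¹ • (z - A z) ∈ LinearMap.ker (A + LinearMap.id) := by
      rw [LinearMap.mem_ker, LinearMap.add_apply, LinearMap.id_apply]
      rw [map_smul, map_sub, hA2']
      module
    have hsplit : z = (2:ℝ)⁻¹ • (z + A z) + (2:ℝ)⁻¹ • (z - A z) := by module
    calc P z = P ((2:ℝ)⁻¹ • (z + A z) + (2:ℝ)⁻¹ • (z - A z)) := by rw [← hsplit]
      _ = P ((2:ℝ)⁻¹ • (z + A z)) + P ((2:ℝ)⁻¹ • (z - A z)) := map_add _ _ _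
      _ = (2:ℝ)⁻¹ • (z + A z) + 0 := by rw [hPp _ hzp, hPm _ hzm]
      _ = (2:ℝ)⁻¹ • (z + A z) := add_zero _
  have hPB : ∀ u : V, P (B u) = 0 := by
    intro u
    apply hPm
    rw [LinearMap.mem_ker, LinearMap.add_apply, LinearMap.id_apply, hBapp, map_sub, hA2']
    abel
  have hPker : ∀ z : V, P z ∈ LinearMap.ker (A - LinearMap.id) := by
    intro z
    rw [LinearMap.mem_ker, LinearMap.sub_apply, LinearMap.id_apply, hPform,
      map_smul, map_add, hA2']
    module
  -- main commutation
  have hmain : ∀ z : V, P (g z) = g (P z) := by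
    intro z
    set p := P z with hp
    set d := z - P z with hd
    have hAd : A d = -d := by
      rw [hd, map_sub, hPform]
      rw [map_smul, map_add, hA2']
      module
    have hBline : ∀ t : ℝ, B (p + t • d) = (2*t) • d := by
      intro t
      have hAp : A p = p := by
        have := hPker z
        rw [LinearMap.mem_ker, LinearMap.sub_apply, LinearMap.id_apply, sub_eq_zero] at this
        exact this
      rw [hBapp, map_add, map_smul, hAd, hAp]
      module
    let PC : V →L[ℝ] V := { toLinearMap := P, cont := P.continuous_of_finiteDimensional }
    let φ : ℝ → V := fun t => PC (g (p + t • d))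
    have hφ' : ∀ t : ℝ, HasDerivAt φ (PC (fderiv ℝ g (p + t • d) d)) t := by
      intro t
      have hline : HasDerivAt (fun t : ℝ => p + t • d) d t := by
        simpa using ((hasDerivAt_id t).smul_const d).const_add p
      have hgc : HasDerivAt (fun t : ℝ => g (p + t • d)) (fderiv ℝ g (p + t • d) d) t :=
        (hgd _).hasFDerivAt.comp_hasDerivAt t hline
      exact (ContinuousLinearMap.hasFDerivAt (F := V) (x := g (p + t • d)) PC).comp_hasDerivAt t hgc
    have hψcont : Continuous fun t : ℝ => PC (fderiv ℝ g (p + t • d) d) := by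
      apply PC.continuous.comp
      have h1 : Continuous fun t : ℝ => p + t • d :=
        continuous_const.add (continuous_id.smul continuous_const)
      have h2 : Continuous (fderiv ℝ g) := hg.continuous_fderiv (by simp)
      exact ((ContinuousLinearMap.apply ℝ V d).continuous).comp (h2.comp h1)
    have hψ0 : ∀ t : ℝ, PC (fderiv ℝ g (p + t • d) d) = 0 := by
      have : Set.EqOn (fun t : ℝ => PC (fderiv ℝ g (p + t • d) d)) (fun _ => (0:V))
          ({(0:ℝ)}ᶜ) := by
        intro t ht
        have htne : t ≠ 0 := ht
        have h2t : (2*t) ≠ 0 := mul_ne_zero two_ne_zero htne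
        show PC (fderiv ℝ g (p + t • d) d) = 0
        have hdt : (2*t)⁻¹ • B (g (p + t • d)) = fderiv ℝ g (p + t • d) d := by
          rw [hBg, hBline t, map_smul, smul_smul, inv_mul_cancel₀ h2t, one_smul]
        rw [← hdt, map_smul]
        show (2*t)⁻¹ • P (B (g (p + t • d))) = 0
        rw [hPB, smul_zero]
      have heq := Continuous.ext_on (dense_compl_singleton (0:ℝ)) hψcont continuous_const this
      intro t
      exact congrFun heq t
    have hφconst : φ 1 = φ 0 := by
      have hφ'' : ∀ t : ℝ, HasDerivAt φ 0 t := fun t => hψ0 t ▸ hφ' t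
      apply is_const_of_deriv_eq_zero
      · exact fun t => (hφ'' t).differentiableAt
      · exact fun t => (hφ'' t).deriv
    have h1 : φ 1 = P (g z) := by
      show PC (g (p + (1:ℝ) • d)) = P (g z)
      rw [one_smul]
      have : p + d = z := by rw [hp, hd]; abel
      rw [this]
      rfl
    have h0 : φ 0 = g (P z) := by
      show PC (g (p + (0:ℝ) • d)) = g (P z)
      rw [zero_smul, add_zero]
      have hgp : g p ∈ LinearMap.ker (A - LinearMap.id) := hplus p (hPker z)
      show P (g p) = g (P z)
      rw [hPp _ hgp, hp]
    rw [← h1, hφconst, h0]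
  exact ⟨hmain, hplus⟩
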